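/- Summability of measures of shrinking annuli: Let r₀ > 0, ϑ a finite Borel measure on [0, r₀], and 0 < a < 1. Then for Lebesgue-almost every r ∈ [0, r₀], ∑_{k=0}^{∞} ϑ([r − a^k, r + a^k]) < ∞. -/

import Mathlib

open MeasureTheory

lemma annuli_meas (ϑ : Measure ℝ) [IsFiniteMeasure ϑ] (ε : ℝ) :
    Measurable (fun r : ℝ => ϑ (Set.Icc (r - ε) (r + ε))) := by
  have hs : MeasurableSet {p : ℝ × ℝ | p.2 ∈ Set.Icc (p.1 - ε) (p.1 + ε)} := by
    apply MeasurableSet.inter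
    · exact measurableSet_le (f := fun p : ℝ × ℝ => p.1 - ε) (g := fun p : ℝ × ℝ => p.2) (by fun_prop) (by fun_prop)
    · exact measurableSet_le (f := fun p : ℝ × ℝ => p.2) (g := fun p : ℝ × ℝ => p.1 + ε) (by fun_prop) (by fun_prop)
  have := measurable_measure_prodMk_left (ν := ϑ) hs
  convert this using 2 with r
  rfl

lemma annuli_int_bound (ϑ : Measure ℝ) [IsFiniteMeasure ϑ] (ε : ℝ)
    (A : Set ℝ) (hA : MeasurableSet A) :
    ∫⁻ r in A, ϑ (Set.Icc (r - ε) (r + ε)) ≤ ENNReal.ofReal (2 * ε) * ϑ Set.univ := by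
  have hs : MeasurableSet {p : ℝ × ℝ | p.2 ∈ Set.Icc (p.1 - ε) (p.1 + ε)} := by
    apply MeasurableSet.inter
    · exact measurableSet_le (f := fun p : ℝ × ℝ => p.1 - ε) (g := fun p : ℝ × ℝ => p.2) (by fun_prop) (by fun_prop)
    · exact measurableSet_le (f := fun p : ℝ × ℝ => p.2) (g := fun p : ℝ × ℝ => p.1 + ε) (by fun_prop) (by fun_prop)
  have key : ∫⁻ r in A, ∫⁻ s, {p : ℝ × ℝ | p.2 ∈ Set.Icc (p.1 - ε) (p.1 + ε)}.indicator 1 (r, s) ∂ϑ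
      = ∫⁻ s, ∫⁻ r in A, {p : ℝ × ℝ | p.2 ∈ Set.Icc (p.1 - ε) (p.1 + ε)}.indicator 1 (r, s) ∂(volume) ∂ϑ := by
    apply lintegral_lintegral_swap
    exact ((measurable_one.indicator hs).aemeasurable)
  calc ∫⁻ r in A, ϑ (Set.Icc (r - ε) (r + ε))
      = ∫⁻ r in A, ∫⁻ s, {p : ℝ × ℝ | p.2 ∈ Set.Icc (p.1 - ε) (p.1 + ε)}.indicator 1 (r, s) ∂ϑ := by
        refine lintegral_congr fun r => ?_
        rw [show (fun s => ({p : ℝ × ℝ | p.2 ∈ Set.Icc (p.1 - ε) (p.1 + ε)}.indicator 1 (r, s) : ENNReal))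
            = (Set.Icc (r - ε) (r + ε)).indicator 1 from ?_]
        · rw [lintegral_indicator measurableSet_Icc]
          simp
        · ext s
          simp [Set.indicator_apply]
    _ = ∫⁻ s, ∫⁻ r in A, {p : ℝ × ℝ | p.2 ∈ Set.Icc (p.1 - ε) (p.1 + ε)}.indicator 1 (r, s) ∂(volume) ∂ϑ := key
    _ ≤ ∫⁻ s, ENNReal.ofReal (2 * ε) ∂ϑ := by
        refine lintegral_mono fun s => ?_
        calc ∫⁻ r in A, {p : ℝ × ℝ | p.2 ∈ Set.Icc (p.1 - ε) (p.1 + ε)}.indicator 1 (r, s) ∂(volume)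
            ≤ ∫⁻ r, (Set.Icc (s - ε) (s + ε)).indicator 1 r ∂(volume) := by
              refine le_trans (setLIntegral_le_lintegral _ _) (lintegral_mono fun r => ?_)
              simp only [Set.indicator_apply, Set.mem_setOf_eq, Set.mem_Icc]
              split_ifs with h1 h2
              · exact le_refl _
              · exact absurd ⟨by linarith [h1.1], by linarith [h1.2]⟩ h2
              · exact zero_le
              · exact le_refl _
          _ = volume (Set.Icc (s - ε) (s + ε)) := by
              rw [lintegral_indicator measurableSet_Icc]; simp
          _ ≤ ENNReal.ofReal (2 * ε) := by
              rw [Real.volume_Icc]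
              exact ENNReal.ofReal_le_ofReal (by linarith)
    _ = ENNReal.ofReal (2 * ε) * ϑ Set.univ := by
        rw [lintegral_const]

/-- **Summability of measures of shrinking annuli.** If `ϑ` is a finite Borel measure on
`[0, r₀]` and `0 < a < 1`, then for Lebesgue-almost every `r ∈ [0, r₀]` the series
`∑_k ϑ([r − a^k, r + a^k])` converges. -/
theorem annuli_measures_summable (r₀ : ℝ) (hr₀ : 0 < r₀)
    (ϑ : Measure ℝ) [IsFiniteMeasure ϑ] (hsupp : ϑ (Set.Icc 0 r₀)ᶜ = 0)
    (a : ℝ) (ha0 : 0 < a) (ha1 : a < 1) :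
    ∀ᵐ r ∂(volume.restrict (Set.Icc 0 r₀)),
      Summable (fun k : ℕ => (ϑ (Set.Icc (r - a ^ k) (r + a ^ k))).toReal) := by
  set F : ℝ → ENNReal := fun r => ∑' k : ℕ, ϑ (Set.Icc (r - a ^ k) (r + a ^ k)) with hF
  have hFmeas : Measurable F := Measurable.ennreal_tsum fun k => annuli_meas ϑ (a ^ k)
  have hint : ∫⁻ r in Set.Icc 0 r₀, F r ≠ ⊤ := by
    rw [hF]
    rw [lintegral_tsum fun k => (annuli_meas ϑ (a ^ k)).aemeasurable]
    have hbound : ∑' k : ℕ, ∫⁻ r in Set.Icc 0 r₀, ϑ (Set.Icc (r - a ^ k) (r + a ^ k))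
        ≤ ∑' k : ℕ, ENNReal.ofReal (2 * a ^ k) * ϑ Set.univ :=
      ENNReal.tsum_le_tsum fun k => annuli_int_bound ϑ (a ^ k) _ measurableSet_Icc
    refine ne_top_of_le_ne_top ?_ hbound
    have : ∑' k : ℕ, ENNReal.ofReal (2 * a ^ k) * ϑ Set.univ
        = (ENNReal.ofReal 2 * ∑' k : ℕ, ENNReal.ofReal a ^ k) * ϑ Set.univ := by
      rw [ENNReal.tsum_mul_right, ← ENNReal.tsum_mul_left]
      congr 1
      refine tsum_congr fun k => ?_
      rw [ENNReal.ofReal_mul (by norm_num), ENNReal.ofReal_pow ha0.le]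
    rw [this, ENNReal.tsum_geometric]
    refine ENNReal.mul_ne_top (ENNReal.mul_ne_top (by simp) ?_) (measure_ne_top ϑ _)
    rw [ENNReal.inv_ne_top]
    simp only [ne_eq, tsub_eq_zero_iff_le, not_le]
    exact ENNReal.ofReal_lt_one.2 ha1
  have hae : ∀ᵐ r ∂(volume.restrict (Set.Icc 0 r₀)), F r < ⊤ :=
    ae_lt_top hFmeas hint
  filter_upwards [hae] with r hr
  exact ENNReal.summable_toReal hr.ne
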